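/- Let φ satisfy φ(0)=0 and φ'(s)=1/√(1+2φ(s)²) on [0,∞). Then lim_{s→∞} φ(s)/√s = 2^{1/4} and lim_{s→∞} φ'(s)·√s = 2^{−3/4}. -/

import Mathlib

open Real Filter Topology

private lemma sqrt_integrand_cont : Continuous fun t : ℝ => Real.sqrt (1 + 2 * t ^ 2) :=
  Real.continuous_sqrt.comp (by continuity)

/-- For the solution `φ` of `φ' = (1+2φ²)^{-1/2}`, `φ(0)=0` on `[0,∞)`,
one has `φ(s)/√s → 2^(1/4)` and `φ'(s)·√s → 2^(-3/4)` as `s → ∞`. -/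
theorem stmt_5 (φ : ℝ → ℝ) (h0 : φ 0 = 0)
    (hode : ∀ s : ℝ, 0 ≤ s → HasDerivAt φ (1 / Real.sqrt (1 + 2 * (φ s) ^ 2)) s) :
    Tendsto (fun s : ℝ => φ s / Real.sqrt s) atTop (𝓝 ((2 : ℝ) ^ ((1 : ℝ) / 4))) ∧
    Tendsto (fun s : ℝ => deriv φ s * Real.sqrt s) atTop (𝓝 ((2 : ℝ) ^ (-(3 : ℝ) / 4))) := by
  have hApos : ∀ s : ℝ, (0:ℝ) < 1 + 2 * (φ s) ^ 2 := fun s => by positivity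
  have hsqrtpos : ∀ s : ℝ, (0:ℝ) < Real.sqrt (1 + 2 * (φ s) ^ 2) :=
    fun s => Real.sqrt_pos.2 (hApos s)
  -- φ is nonnegative on [0,∞)
  have hmono : StrictMonoOn φ (Set.Ici (0:ℝ)) := by
    apply strictMonoOn_of_deriv_pos (convex_Ici 0)
    · exact fun x hx => ((hode x hx).continuousAt).continuousWithinAt
    · intro x hx
      rw [interior_Ici] at hx
      rw [(hode x hx.le).deriv]
      positivity
  have hφnonneg : ∀ s : ℝ, 0 ≤ s → 0 ≤ φ s := by
    intro s hs
    rcases eq_or_lt_of_le hs with h | h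
    · simp [← h, h0]
    · have := hmono Set.self_mem_Ici (le_of_lt h) h
      simpa [h0] using this.le
  -- The antiderivative G
  set G : ℝ → ℝ := fun y => ∫ t in (0:ℝ)..y, Real.sqrt (1 + 2 * t ^ 2) with hG
  have hGderiv : ∀ y : ℝ, HasDerivAt G (Real.sqrt (1 + 2 * y ^ 2)) y := by
    intro y
    exact intervalIntegral.integral_hasDerivAt_right
      (sqrt_integrand_cont.intervalIntegrable _ _)
      (sqrt_integrand_cont.stronglyMeasurableAtFilter _ _)
      sqrt_integrand_cont.continuousAt
  -- G (φ s) = s for s ≥ 0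
  have key : ∀ s : ℝ, 0 ≤ s → G (φ s) = s := by
    intro s hs
    have hcont : ContinuousOn (fun u => G (φ u) - u) (Set.Icc 0 s) := by
      apply ContinuousOn.sub _ continuousOn_id
      intro u hu
      exact (((hGderiv (φ u)).comp u (hode u hu.1)).continuousAt).continuousWithinAt
    have hderiv : ∀ u ∈ Set.Ico (0:ℝ) s,
        HasDerivWithinAt (fun u => G (φ u) - u) 0 (Set.Ici u) u := by
      intro u hu
      have h1 := ((hGderiv (φ u)).comp u (hode u hu.1)).sub (hasDerivAt_id u)
      have h2 : Real.sqrt (1 + 2 * (φ u) ^ 2) * (1 / Real.sqrt (1 + 2 * (φ u) ^ 2)) - 1 = 0 := by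
        field_simp
        ring
      rw [h2] at h1
      exact h1.hasDerivWithinAt
    have := constant_of_has_deriv_right_zero hcont hderiv s (Set.right_mem_Icc.2 hs)
    simp only [h0] at this
    have hG0 : G 0 = 0 := by simp [hG]
    rw [hG0] at this
    linarith
  -- bounds on G : for y ≥ 0, (√2/2) y² ≤ G y ≤ y + (√2/2) y²
  have hGlow : ∀ y : ℝ, 0 ≤ y → Real.sqrt 2 / 2 * y ^ 2 ≤ G y := by
    intro y hy
    have : (∫ t in (0:ℝ)..y, Real.sqrt 2 * t) ≤ G y := by
      apply intervalIntegral.integral_mono_on hy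
      · exact (by continuity : Continuous fun t : ℝ => Real.sqrt 2 * t).intervalIntegrable _ _
      · exact sqrt_integrand_cont.intervalIntegrable _ _
      · intro t ht
        have h2t : Real.sqrt 2 * t = Real.sqrt (2 * t ^ 2) := by
          rw [Real.sqrt_mul (by norm_num : (0:ℝ) ≤ 2), Real.sqrt_sq ht.1]
        rw [h2t]
        exact Real.sqrt_le_sqrt (by linarith)
    calc Real.sqrt 2 / 2 * y ^ 2 = ∫ t in (0:ℝ)..y, Real.sqrt 2 * t := by
          rw [intervalIntegral.integral_const_mul, integral_id]; ring
      _ ≤ G y := this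
  have hGhigh : ∀ y : ℝ, 0 ≤ y → G y ≤ y + Real.sqrt 2 / 2 * y ^ 2 := by
    intro y hy
    have : G y ≤ ∫ t in (0:ℝ)..y, (1 + Real.sqrt 2 * t) := by
      apply intervalIntegral.integral_mono_on hy
      · exact sqrt_integrand_cont.intervalIntegrable _ _
      · exact (by continuity : Continuous fun t : ℝ => 1 + Real.sqrt 2 * t).intervalIntegrable _ _
      · intro t ht
        have h2t : Real.sqrt 2 * t = Real.sqrt (2 * t ^ 2) := by
          rw [Real.sqrt_mul (by norm_num : (0:ℝ) ≤ 2), Real.sqrt_sq ht.1]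
        have hle : Real.sqrt (1 + 2 * t ^ 2) ≤ Real.sqrt ((1 + Real.sqrt 2 * t) ^ 2) := by
          apply Real.sqrt_le_sqrt
          nlinarith [Real.sq_sqrt (by norm_num : (0:ℝ) ≤ 2), Real.sqrt_nonneg 2, ht.1]
        rwa [Real.sqrt_sq (by nlinarith [Real.sqrt_nonneg 2, ht.1])] at hle
    calc G y ≤ ∫ t in (0:ℝ)..y, (1 + Real.sqrt 2 * t) := this
      _ = y + Real.sqrt 2 / 2 * y ^ 2 := by
          rw [intervalIntegral.integral_add (intervalIntegrable_const)
            ((by continuity : Continuous fun t : ℝ => Real.sqrt 2 * t).intervalIntegrable _ _),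
            intervalIntegral.integral_const, intervalIntegral.integral_const_mul, integral_id]
          simp [smul_eq_mul]
          ring
  have sqrt2pos : (0:ℝ) < Real.sqrt 2 := Real.sqrt_pos.2 (by norm_num)
  -- φ s ^ 2 ≤ √2 s and φ s ^2 ≥ √2 s - √2 φ s, for s ≥ 0
  have hub : ∀ s : ℝ, 0 ≤ s → φ s ^ 2 ≤ Real.sqrt 2 * s := by
    intro s hs
    have h1 := hGlow (φ s) (hφnonneg s hs)
    rw [key s hs] at h1
    nlinarith [Real.sq_sqrt (by norm_num : (0:ℝ) ≤ 2)]
  have hlb : ∀ s : ℝ, 0 ≤ s → Real.sqrt 2 * s - Real.sqrt 2 * φ s ≤ φ s ^ 2 := by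
    intro s hs
    have h1 := hGhigh (φ s) (hφnonneg s hs)
    rw [key s hs] at h1
    nlinarith [Real.sq_sqrt (by norm_num : (0:ℝ) ≤ 2)]
  -- φ s ≤ 2^{1/4} √s
  have hφub : ∀ s : ℝ, 0 ≤ s → φ s ≤ Real.sqrt (Real.sqrt 2) * Real.sqrt s := by
    intro s hs
    have : φ s = Real.sqrt (φ s ^ 2) := (Real.sqrt_sq (hφnonneg s hs)).symm
    rw [this, ← Real.sqrt_mul sqrt2pos.le]
    exact Real.sqrt_le_sqrt (hub s hs)
  -- main squeeze : φ² / s → √2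
  have hsqinv : Tendsto (fun s : ℝ => (Real.sqrt s)⁻¹) atTop (𝓝 0) := by
    apply Tendsto.inv_tendsto_atTop
    apply tendsto_atTop_atTop.2
    intro b
    refine ⟨max (b ^ 2) 0, fun a ha => ?_⟩
    rcases le_or_gt b 0 with hb | hb
    · exact hb.trans (Real.sqrt_nonneg a)
    · have h1 : b ^ 2 ≤ a := (le_max_left _ _).trans ha
      calc b = Real.sqrt (b ^ 2) := (Real.sqrt_sq hb.le).symm
        _ ≤ Real.sqrt a := Real.sqrt_le_sqrt h1
  have T1 : Tendsto (fun s : ℝ => φ s ^ 2 / s) atTop (𝓝 (Real.sqrt 2)) := by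
    apply tendsto_of_tendsto_of_tendsto_of_le_of_le'
      (g := fun s : ℝ => Real.sqrt 2 - Real.sqrt 2 * Real.sqrt (Real.sqrt 2) * (Real.sqrt s)⁻¹)
      (h := fun _ : ℝ => Real.sqrt 2)
    · have : Tendsto (fun s : ℝ => Real.sqrt 2 * Real.sqrt (Real.sqrt 2) * (Real.sqrt s)⁻¹)
          atTop (𝓝 (Real.sqrt 2 * Real.sqrt (Real.sqrt 2) * 0)) :=
        hsqinv.const_mul _
      simpa using (tendsto_const_nhds (x := Real.sqrt 2)).sub this
    · exact tendsto_const_nhds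
    · filter_upwards [eventually_gt_atTop (0:ℝ)] with s hs
      have hlb' := hlb s hs.le
      have hφub' := hφub s hs.le
      have hss : Real.sqrt s * Real.sqrt s = s := Real.mul_self_sqrt hs.le
      have hsq : (0:ℝ) < Real.sqrt s := Real.sqrt_pos.2 hs
      rw [le_div_iff₀ hs]
      have : Real.sqrt 2 * φ s ≤ Real.sqrt 2 * (Real.sqrt (Real.sqrt 2) * Real.sqrt s) :=
        mul_le_mul_of_nonneg_left hφub' sqrt2pos.le
      have hkey : (Real.sqrt 2 - Real.sqrt 2 * Real.sqrt (Real.sqrt 2) * (Real.sqrt s)⁻¹) * s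
          = Real.sqrt 2 * s - Real.sqrt 2 * (Real.sqrt (Real.sqrt 2) * Real.sqrt s) := by
        have h1 : (Real.sqrt s)⁻¹ * s = Real.sqrt s := by
          rw [inv_mul_eq_div, Real.div_sqrt]
        have h2 : (Real.sqrt 2 - Real.sqrt 2 * Real.sqrt (Real.sqrt 2) * (Real.sqrt s)⁻¹) * s
            = Real.sqrt 2 * s - Real.sqrt 2 * Real.sqrt (Real.sqrt 2) * ((Real.sqrt s)⁻¹ * s) := by
          ring
        rw [h2, h1]
        ring
      rw [hkey]
      linarith
    · filter_upwards [eventually_gt_atTop (0:ℝ)] with s hs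
      rw [div_le_iff₀ hs]
      nlinarith [hub s hs.le]
  have c14 : (2 : ℝ) ^ ((1:ℝ)/4) = Real.sqrt (Real.sqrt 2) := by
    rw [Real.sqrt_eq_rpow, Real.sqrt_eq_rpow, ← Real.rpow_mul (by norm_num : (0:ℝ) ≤ 2)]
    norm_num
  constructor
  · -- first limit
    have h2 : Tendsto (fun s : ℝ => Real.sqrt (φ s ^ 2 / s)) atTop (𝓝 (Real.sqrt (Real.sqrt 2))) :=
      (Real.continuous_sqrt.continuousAt).tendsto.comp T1
    rw [c14]
    apply h2.congr'
    filter_upwards [eventually_gt_atTop (0:ℝ)] with s hs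
    rw [Real.sqrt_div (sq_nonneg _), Real.sqrt_sq (hφnonneg s hs.le)]
  · -- second limit
    have T2 : Tendsto (fun s : ℝ => (1 + 2 * φ s ^ 2) / s) atTop (𝓝 (2 * Real.sqrt 2)) := by
      have h1 : Tendsto (fun s : ℝ => s⁻¹ + 2 * (φ s ^ 2 / s)) atTop
          (𝓝 (0 + 2 * Real.sqrt 2)) :=
        (tendsto_inv_atTop_zero).add (T1.const_mul 2)
      rw [zero_add] at h1
      apply h1.congr'
      filter_upwards [eventually_gt_atTop (0:ℝ)] with s hs
      field_simp
    have T3 : Tendsto (fun s : ℝ => Real.sqrt (s / (1 + 2 * φ s ^ 2))) atTop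
        (𝓝 (Real.sqrt ((2 * Real.sqrt 2)⁻¹))) := by
      apply (Real.continuous_sqrt.continuousAt).tendsto.comp
      have := T2.inv₀ (by positivity)
      apply this.congr'
      filter_upwards [eventually_gt_atTop (0:ℝ)] with s hs
      rw [inv_div]
    have clim : Real.sqrt ((2 * Real.sqrt 2)⁻¹) = (2:ℝ) ^ (-(3:ℝ)/4) := by
      have h32 : (2:ℝ) * Real.sqrt 2 = (2:ℝ) ^ ((3:ℝ)/2) := by
        rw [Real.sqrt_eq_rpow, ← Real.rpow_one_add' (by norm_num) (by norm_num)]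
        norm_num
      rw [h32, ← Real.rpow_neg (by norm_num : (0:ℝ) ≤ 2), Real.sqrt_eq_rpow,
        ← Real.rpow_mul (by norm_num : (0:ℝ) ≤ 2)]
      norm_num
    rw [← clim]
    apply T3.congr'
    filter_upwards [eventually_gt_atTop (0:ℝ)] with s hs
    rw [(hode s hs.le).deriv, Real.sqrt_div hs.le, div_mul_eq_mul_div, one_mul]
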